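/- arXiv:2507.01847 — 2 statements merged into one kernel-verified Lean document; each statement's English description precedes it below -/
import Mathlib

section
/- Let A be a densely defined closed C-symmetric operator, B = CAC, M_{B*} = N(I + A*CA*C), M_{A*} = N(I + CA*CA*). Then B* maps M_{B*} onto M_{A*}, A* maps M_{A*} onto M_{B*}, and C maps M_{B*} onto M_{A*}. -/
open scoped InnerProductSpace
open LinearPMap

variable {H : Type*} [NormedAddCommGroup H] [InnerProductSpace ℂ H]

/-- A conjugation on a complex inner product space: a conjugate-linear involution
satisfying `⟪Cx, Cy⟫ = ⟪y, x⟫`. -/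
structure Conjugation (H : Type*) [NormedAddCommGroup H] [InnerProductSpace ℂ H] where
  toFun : H → H
  map_add' : ∀ x y, toFun (x + y) = toFun x + toFun y
  map_smulc : ∀ (c : ℂ) (x : H), toFun (c • x) = (starRingEnd ℂ c) • toFun x
  invol : ∀ x, toFun (toFun x) = x
  inner_conj : ∀ x y, ⟪toFun x, toFun y⟫_ℂ = ⟪y, x⟫_ℂ

namespace Conjugation

instance : CoeFun (Conjugation H) fun _ => H → H := ⟨toFun⟩

lemma map_zero (C : Conjugation H) : C 0 = 0 := by
  have := C.map_smulc 0 0; simpa using this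

lemma mem_of_mem_image (C : Conjugation H) {S : Set H} {x : H} (hx : x ∈ C.toFun '' S) :
    C x ∈ S := by
  obtain ⟨t, ht, rfl⟩ := hx
  rwa [C.invol]

/-- The image `C(D)` of a subspace under a conjugation, as a subspace. -/
def conjDomain (C : Conjugation H) (D : Submodule ℂ H) : Submodule ℂ H where
  carrier := C.toFun '' (D : Set H)
  add_mem' := by
    rintro a b ⟨x, hx, rfl⟩ ⟨y, hy, rfl⟩
    exact ⟨x + y, D.add_mem hx hy, (C.map_add' x y).symm ▸ rfl⟩
  zero_mem' := ⟨0, D.zero_mem, C.map_zero⟩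
  smul_mem' := by
    rintro c a ⟨x, hx, rfl⟩
    refine ⟨(starRingEnd ℂ c) • x, D.smul_mem _ hx, ?_⟩
    rw [C.map_smulc]; simp

lemma conj_mem (C : Conjugation H) {D : Submodule ℂ H} {x : H} (hx : x ∈ C.conjDomain D) :
    C x ∈ D := C.mem_of_mem_image hx

/-- The operator `C T C` with domain `C(D(T))`. -/
noncomputable def conjOp (C : Conjugation H) (T : H →ₗ.[ℂ] H) : H →ₗ.[ℂ] H where
  domain := C.conjDomain T.domain
  toFun :=
  { toFun := fun x => C (T ⟨C ↑x, C.conj_mem x.2⟩)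
    map_add' := by
      intro x y
      have h : (⟨C ↑(x + y), C.conj_mem (x + y).2⟩ : T.domain)
          = ⟨C ↑x, C.conj_mem x.2⟩ + ⟨C ↑y, C.conj_mem y.2⟩ := by
        apply Subtype.ext; simp [C.map_add']
      try dsimp only
      rw [h, T.map_add, C.map_add']
    map_smul' := by
      intro c x
      have h : (⟨C ↑(c • x), C.conj_mem (c • x).2⟩ : T.domain)
          = (starRingEnd ℂ c) • (⟨C ↑x, C.conj_mem x.2⟩ : T.domain) := by
        apply Subtype.ext; simp [C.map_smulc]
      try dsimp only
      rw [h, T.map_smul, C.map_smulc]; simp }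

/-- `A` is `C`-symmetric: `CAC ⊆ A*`. -/
noncomputable def IsCSymmetric [CompleteSpace H] (C : Conjugation H) (A : H →ₗ.[ℂ] H) : Prop :=
  C.conjOp A ≤ A†

/-- `A` is `C`-self-adjoint: `CAC = A*`. -/
noncomputable def IsCSelfAdjoint [CompleteSpace H] (C : Conjugation H) (A : H →ₗ.[ℂ] H) : Prop :=
  C.conjOp A = A†

end Conjugation
variable [CompleteSpace H]

open scoped InnerProductSpace in
/-- The kernel `N(I + A*CA*C)`. -/
noncomputable def kerIplusAstarCAstarC (C : Conjugation H) (A : H →ₗ.[ℂ] H) : Set H :=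
  {g | ∃ hg : g ∈ (C.conjOp (A†)).domain, ∃ h2 : (C.conjOp (A†)) ⟨g, hg⟩ ∈ (A†).domain,
      g + A† ⟨(C.conjOp (A†)) ⟨g, hg⟩, h2⟩ = 0}

/-- The kernel `N(I + CA*CA*)`. -/
noncomputable def kerIplusCAstarCAstar (C : Conjugation H) (A : H →ₗ.[ℂ] H) : Set H :=
  {g | ∃ hg : g ∈ (A†).domain, ∃ h2 : A† ⟨g, hg⟩ ∈ (C.conjOp (A†)).domain,
      g + (C.conjOp (A†)) ⟨A† ⟨g, hg⟩, h2⟩ = 0}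

/-- The kernel `N(I + A*B*)` where `B = CAC`. -/
noncomputable def kerIplusAstarBstar (C : Conjugation H) (A : H →ₗ.[ℂ] H) : Set H :=
  {g | ∃ hg : g ∈ ((C.conjOp A)†).domain, ∃ h2 : (C.conjOp A)† ⟨g, hg⟩ ∈ (A†).domain,
      g + A† ⟨(C.conjOp A)† ⟨g, hg⟩, h2⟩ = 0}

open scoped InnerProductSpace in
/-- The orthogonal complement of `S` within `W`, with respect to the graph inner
product `⟪f, g⟫ + ⟪Tf, Tg⟫` of `T`. -/
def graphOrthComplIn (T : H →ₗ.[ℂ] H) (W S : Set H) : Set H :=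
  {g | g ∈ W ∧ ∃ hg : g ∈ T.domain, ∀ f ∈ S, ∀ hf : f ∈ T.domain,
      ⟪f, g⟫_ℂ + ⟪T ⟨f, hf⟩, T ⟨g, hg⟩⟫_ℂ = 0}

/-- The deficiency space `N(T* - μ)`. -/
noncomputable def defectSpace (T : H →ₗ.[ℂ] H) (μ : ℂ) : Submodule ℂ H where
  carrier := {z | ∃ hz : z ∈ (T†).domain, T† ⟨z, hz⟩ = μ • z}
  add_mem' := by
    rintro a b ⟨ha, hva⟩ ⟨hb, hvb⟩
    refine ⟨(T†).domain.add_mem ha hb, ?_⟩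
    have h : (⟨a + b, (T†).domain.add_mem ha hb⟩ : (T†).domain) = ⟨a, ha⟩ + ⟨b, hb⟩ := rfl
    rw [h, LinearPMap.map_add, hva, hvb, smul_add]
  zero_mem' := by
    refine ⟨(T†).domain.zero_mem, ?_⟩
    have h : (⟨(0 : H), (T†).domain.zero_mem⟩ : (T†).domain) = 0 := rfl
    rw [h, LinearPMap.map_zero, smul_zero]
  smul_mem' := by
    rintro c a ⟨ha, hva⟩
    refine ⟨(T†).domain.smul_mem c ha, ?_⟩
    have h : (⟨c • a, (T†).domain.smul_mem c ha⟩ : (T†).domain) = c • ⟨a, ha⟩ := rfl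
    rw [h, LinearPMap.map_smul, hva, smul_comm]


namespace Conjugation

variable (C : Conjugation H)

lemma map_neg' (x : H) : C (-x) = -C x := by
  have := C.map_smulc (-1) x; simpa using this

lemma map_sub' (x y : H) : C (x - y) = C x - C y := by
  rw [sub_eq_add_neg, sub_eq_add_neg, C.map_add', C.map_neg']

lemma norm_map' (x : H) : ‖C x‖ = ‖x‖ := by
  rw [norm_eq_sqrt_re_inner (𝕜 := ℂ), norm_eq_sqrt_re_inner (𝕜 := ℂ), C.inner_conj]

lemma dense_image {D : Set H} (h : Dense D) : Dense (C.toFun '' D) := by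
  intro y
  rw [Metric.mem_closure_iff]
  intro ε hε
  obtain ⟨b, hb, hdist⟩ := Metric.mem_closure_iff.mp (h (C y)) ε hε
  refine ⟨C b, ⟨b, hb, rfl⟩, ?_⟩
  rw [dist_eq_norm, ← C.invol y, ← C.map_sub', C.norm_map', ← dist_eq_norm]
  exact hdist

lemma conjOp_apply (T : H →ₗ.[ℂ] H) (x : (C.conjOp T).domain) :
    C.conjOp T x = C (T ⟨C ↑x, C.conj_mem x.2⟩) := rfl

lemma mem_conjDomain {D : Submodule ℂ H} {x : H} (hx : C x ∈ D) :
    x ∈ C.conjDomain D := ⟨C x, hx, C.invol x⟩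

/-- `(C A C)† = C A† C` for densely defined `A`. -/
lemma conj_adjoint [CompleteSpace H] (A : H →ₗ.[ℂ] H) (hA : Dense (A.domain : Set H)) :
    (C.conjOp A)† = C.conjOp (A†) := by
  have hB : Dense ((C.conjOp A).domain : Set H) := C.dense_image hA
  have hform : (C.conjOp A).IsFormalAdjoint (C.conjOp (A†)) := by
    intro x y
    rw [C.conjOp_apply, C.conjOp_apply]
    calc ⟪C (A ⟨C ↑x, C.conj_mem x.2⟩), ↑y⟫_ℂ
        = ⟪C (A ⟨C ↑x, C.conj_mem x.2⟩), C (C ↑y)⟫_ℂ := by rw [C.invol]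
      _ = ⟪C ↑y, A ⟨C ↑x, C.conj_mem x.2⟩⟫_ℂ := C.inner_conj _ _
      _ = ⟪A† ⟨C ↑y, C.conj_mem y.2⟩, (⟨C ↑x, C.conj_mem x.2⟩ : A.domain)⟫_ℂ :=
          (adjoint_isFormalAdjoint hA ⟨C ↑y, C.conj_mem y.2⟩ ⟨C ↑x, C.conj_mem x.2⟩).symm
      _ = ⟪C (C (A† ⟨C ↑y, C.conj_mem y.2⟩)), C (C (C ↑x))⟫_ℂ := by rw [C.invol, C.invol]
      _ = ⟪C (C ↑x), C (A† ⟨C ↑y, C.conj_mem y.2⟩)⟫_ℂ := C.inner_conj _ _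
      _ = ⟪(↑x : H), C (A† ⟨C ↑y, C.conj_mem y.2⟩)⟫_ℂ := by rw [C.invol]
  have hle : C.conjOp (A†) ≤ (C.conjOp A)† := hform.le_adjoint hB
  have hsub : ((C.conjOp A)†).domain ≤ (C.conjOp (A†)).domain := by
    intro y hy
    have hfa := adjoint_isFormalAdjoint hB (T := C.conjOp A)
    refine C.mem_conjDomain (LinearPMap.mem_adjoint_domain_of_exists _
      ⟨C ((C.conjOp A)† ⟨y, hy⟩), fun v => ?_⟩)
    set w := (C.conjOp A)† ⟨y, hy⟩ with hw
    have hvB : (↑v : H) ∈ A.domain := v.2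
    have hCv : C ↑v ∈ (C.conjOp A).domain := ⟨↑v, hvB, rfl⟩
    have h1 : ⟪w, C ↑v⟫_ℂ = ⟪y, (C.conjOp A) ⟨C ↑v, hCv⟩⟫_ℂ := hfa ⟨y, hy⟩ ⟨C ↑v, hCv⟩
    have h2 : (C.conjOp A) ⟨C ↑v, hCv⟩ = C (A v) := by
      rw [C.conjOp_apply]
      congr 1
      exact congrArg _ (Subtype.ext (C.invol ↑v))
    calc ⟪C w, ↑v⟫_ℂ = ⟪C w, C (C ↑v)⟫_ℂ := by rw [C.invol]
      _ = ⟪C ↑v, w⟫_ℂ := C.inner_conj _ _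
      _ = (starRingEnd ℂ) ⟪w, C ↑v⟫_ℂ := (inner_conj_symm _ _).symm
      _ = (starRingEnd ℂ) ⟪y, C (A v)⟫_ℂ := by rw [h1, h2]
      _ = (starRingEnd ℂ) ⟪C (C y), C (A v)⟫_ℂ := by rw [C.invol]
      _ = (starRingEnd ℂ) ⟪A v, C y⟫_ℂ := by rw [C.inner_conj]
      _ = ⟪C y, A v⟫_ℂ := inner_conj_symm _ _
  exact (eq_of_le_of_domain_eq hle (le_antisymm hle.1 hsub)).symm

end Conjugation

private lemma apply_congr' {T : H →ₗ.[ℂ] H} {x y : H} (h : x = y) (hx : x ∈ T.domain)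
    (hy : y ∈ T.domain) : T ⟨x, hx⟩ = T ⟨y, hy⟩ := by cases h; rfl

private lemma neg_apply' {T : H →ₗ.[ℂ] H} {x : H} (hx : x ∈ T.domain)
    (hx' : -x ∈ T.domain) : T ⟨-x, hx'⟩ = -T ⟨x, hx⟩ := by
  have : (⟨-x, hx'⟩ : T.domain) = -⟨x, hx⟩ := rfl
  rw [this, LinearPMap.map_neg]

/-- Abstract form of the mapping property of the defect kernels. -/
private lemma ker_image (S T : H →ₗ.[ℂ] H) :
    {x : H | ∃ g ∈ {g : H | ∃ hg : g ∈ S.domain, ∃ h2 : S ⟨g, hg⟩ ∈ T.domain,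
        g + T ⟨S ⟨g, hg⟩, h2⟩ = 0},
      ∃ hg : g ∈ S.domain, S ⟨g, hg⟩ = x}
    = {g : H | ∃ hg : g ∈ T.domain, ∃ h2 : T ⟨g, hg⟩ ∈ S.domain,
        g + S ⟨T ⟨g, hg⟩, h2⟩ = 0} := by
  ext x
  constructor
  · rintro ⟨g, ⟨hg, h2, heq⟩, hg', rfl⟩
    have ht : T ⟨S ⟨g, hg'⟩, h2⟩ = -g := eq_neg_of_add_eq_zero_right heq
    have hmem : T ⟨S ⟨g, hg'⟩, h2⟩ ∈ S.domain := by rw [ht]; exact S.domain.neg_mem hg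
    refine ⟨h2, hmem, ?_⟩
    rw [apply_congr' ht hmem (S.domain.neg_mem hg), neg_apply' hg (S.domain.neg_mem hg)]
    exact add_neg_cancel _
  · rintro ⟨hx, h2, heq⟩
    have hs : S ⟨T ⟨x, hx⟩, h2⟩ = -x := eq_neg_of_add_eq_zero_right heq
    have hval : S ⟨-T ⟨x, hx⟩, S.domain.neg_mem h2⟩ = x := by
      rw [neg_apply' h2 (S.domain.neg_mem h2), hs, neg_neg]
    have h2' : S ⟨-T ⟨x, hx⟩, S.domain.neg_mem h2⟩ ∈ T.domain := by rw [hval]; exact hx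
    refine ⟨-T ⟨x, hx⟩, ⟨S.domain.neg_mem h2, h2', ?_⟩, S.domain.neg_mem h2, hval⟩
    rw [apply_congr' hval h2' hx]
    exact neg_add_cancel _

/-- Abstract form of `C`-image of the defect kernel. -/
private lemma conj_ker_image (C : Conjugation H) (T : H →ₗ.[ℂ] H) :
    C.toFun '' {g : H | ∃ hg : g ∈ (C.conjOp T).domain,
        ∃ h2 : (C.conjOp T) ⟨g, hg⟩ ∈ T.domain,
        g + T ⟨(C.conjOp T) ⟨g, hg⟩, h2⟩ = 0}
    = {g : H | ∃ hg : g ∈ T.domain, ∃ h2 : T ⟨g, hg⟩ ∈ (C.conjOp T).domain,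
        g + (C.conjOp T) ⟨T ⟨g, hg⟩, h2⟩ = 0} := by
  ext x
  constructor
  · rintro ⟨g, ⟨hg, h2, heq⟩, rfl⟩
    have hx : C g ∈ T.domain := C.conj_mem hg
    have h2' : T ⟨C g, hx⟩ ∈ (C.conjOp T).domain :=
      C.mem_conjDomain (by
        have hval : C (T ⟨C g, hx⟩) = (C.conjOp T) ⟨g, hg⟩ := rfl
        rw [hval]; exact h2)
    refine ⟨hx, h2', ?_⟩
    show C g + C (T ⟨C (T ⟨C g, C.conj_mem hg⟩), C.conj_mem h2'⟩) = 0
    have key : T ⟨C (T ⟨C g, C.conj_mem hg⟩), C.conj_mem h2'⟩ = -g := by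
      have h4 : T ⟨C (T ⟨C g, C.conj_mem hg⟩), C.conj_mem h2'⟩
          = T ⟨(C.conjOp T) ⟨g, hg⟩, h2⟩ := apply_congr' rfl _ _
      rw [h4]; exact eq_neg_of_add_eq_zero_right heq
    rw [key, C.map_neg', add_neg_cancel]
  · rintro ⟨hx, h2, heq⟩
    have hg : C x ∈ (C.conjOp T).domain := C.mem_conjDomain (by rw [C.invol]; exact hx)
    have hS : (C.conjOp T) ⟨C x, hg⟩ = C (T ⟨x, hx⟩) := by
      show C (T ⟨C (C x), C.conj_mem hg⟩) = _
      rw [apply_congr' (C.invol x) (C.conj_mem hg) hx]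
    have h2' : (C.conjOp T) ⟨C x, hg⟩ ∈ T.domain := by rw [hS]; exact C.conj_mem h2
    refine ⟨C x, ⟨hg, h2', ?_⟩, C.invol x⟩
    have hkey : T ⟨(C.conjOp T) ⟨C x, hg⟩, h2'⟩ = -C x := by
      have e1 : T ⟨(C.conjOp T) ⟨C x, hg⟩, h2'⟩ = T ⟨C (T ⟨x, hx⟩), C.conj_mem h2⟩ :=
        apply_congr' hS _ _
      have e2 : (C.conjOp T) ⟨T ⟨x, hx⟩, h2⟩ = C (T ⟨C (T ⟨x, hx⟩), C.conj_mem h2⟩) := rfl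
      have e3 : C (T ⟨C (T ⟨x, hx⟩), C.conj_mem h2⟩) = -x := by
        rw [← e2]; exact eq_neg_of_add_eq_zero_right heq
      have e4 := congrArg C.toFun e3
      rw [C.invol, C.map_neg'] at e4
      rw [e1, e4]
    rw [hkey, add_neg_cancel]

theorem stmt_5 (C : Conjugation H) (A : H →ₗ.[ℂ] H) (hA : Dense (A.domain : Set H))
    (hclosed : A.IsClosed) (hsym : C.IsCSymmetric A) :
    {x : H | ∃ g ∈ kerIplusAstarCAstarC C A,
        ∃ hg : g ∈ ((C.conjOp A)†).domain, (C.conjOp A)† ⟨g, hg⟩ = x}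
      = kerIplusCAstarCAstar C A
    ∧ {x : H | ∃ g ∈ kerIplusCAstarCAstar C A,
        ∃ hg : g ∈ (A†).domain, A† ⟨g, hg⟩ = x}
      = kerIplusAstarCAstarC C A
    ∧ C.toFun '' kerIplusAstarCAstarC C A = kerIplusCAstarCAstar C A := by
  have E := C.conj_adjoint A hA
  refine ⟨?_, ?_, ?_⟩
  · rw [E]
    exact ker_image (C.conjOp (A†)) (A†)
  · exact ker_image (A†) (C.conjOp (A†))
  · exact conj_ker_image C (A†)
end

section
/- Let A be a densely defined closed C-symmetric operator, B = CAC. The operator S_{B*} := A*C restricted to M_{B*} = N(I + A*CA*C) is an anti-unitary anti-involution on M_{B*} with respect to the graph inner product of H_{B*}; that is, S_{B*} is conjugate-linear, norm-preserving in H_{B*}-norm, maps M_{B*} onto itself, and satisfies S_{B*}² = −I on M_{B*}. -/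
open scoped InnerProductSpace
open LinearPMap

variable {H : Type*} [NormedAddCommGroup H] [InnerProductSpace ℂ H]

variable [CompleteSpace H]

open Classical

/-- The map `S_{B*} = A*C` (extended by `0` outside its natural domain). -/
noncomputable def SBfun (C : Conjugation H) (A : H →ₗ.[ℂ] H) : H → H :=
  fun g => if hg : C g ∈ (A†).domain then A† ⟨C g, hg⟩ else 0

/-- The map `B* = CA*C` (extended by `0` outside its domain). -/
noncomputable def Bstarfun (C : Conjugation H) (A : H →ₗ.[ℂ] H) : H → H :=
  fun g => if hg : g ∈ (C.conjOp (A†)).domain then (C.conjOp (A†)) ⟨g, hg⟩ else 0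

section Aux

lemma Conjugation.map_neg'_s11 (C : Conjugation H) (x : H) : C (-x) = - C x := by
  have h := C.map_smulc (-1) x
  simpa using h

lemma Conjugation.norm_conj (C : Conjugation H) (x : H) : ‖C x‖ = ‖x‖ := by
  have h := C.inner_conj x x
  rw [inner_self_eq_norm_sq_to_K, inner_self_eq_norm_sq_to_K] at h
  have h3 : ‖C.toFun x‖ ^ 2 = ‖x‖ ^ 2 := by exact_mod_cast h
  nlinarith [norm_nonneg (C.toFun x), norm_nonneg x]

lemma mem_conjOp_domain (C : Conjugation H) (T : H →ₗ.[ℂ] H) {g : H}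
    (h : C g ∈ T.domain) : g ∈ (C.conjOp T).domain :=
  ⟨C g, h, C.invol g⟩

lemma pmap_congr (T : H →ₗ.[ℂ] H) {x y : H} (h : x = y) (hx : x ∈ T.domain)
    (hy : y ∈ T.domain) : T ⟨x, hx⟩ = T ⟨y, hy⟩ := by subst h; rfl

lemma pmap_neg (T : H →ₗ.[ℂ] H) {x : H} (hx : x ∈ T.domain) (hnx : -x ∈ T.domain) :
    T ⟨-x, hnx⟩ = - T ⟨x, hx⟩ := by
  have h : (⟨-x, hnx⟩ : T.domain) = -⟨x, hx⟩ := rfl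
  rw [h, T.map_neg]

lemma pmap_add (T : H →ₗ.[ℂ] H) {x y : H} (hx : x ∈ T.domain) (hy : y ∈ T.domain)
    (hxy : x + y ∈ T.domain) : T ⟨x + y, hxy⟩ = T ⟨x, hx⟩ + T ⟨y, hy⟩ := by
  have h : (⟨x + y, hxy⟩ : T.domain) = ⟨x, hx⟩ + ⟨y, hy⟩ := rfl
  rw [h, T.map_add]

lemma pmap_smul (T : H →ₗ.[ℂ] H) (c : ℂ) {x : H} (hx : x ∈ T.domain)
    (hcx : c • x ∈ T.domain) : T ⟨c • x, hcx⟩ = c • T ⟨x, hx⟩ := by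
  have h : (⟨c • x, hcx⟩ : T.domain) = c • ⟨x, hx⟩ := rfl
  rw [h, T.map_smul]

lemma mem_ker_iff (C : Conjugation H) (A : H →ₗ.[ℂ] H) {g : H} :
    g ∈ kerIplusAstarCAstarC C A ↔
    ∃ h1 : C g ∈ (A†).domain, ∃ h2 : C (A† ⟨C g, h1⟩) ∈ (A†).domain,
      g + A† ⟨C (A† ⟨C g, h1⟩), h2⟩ = 0 := by
  constructor
  · rintro ⟨hg, h2, heq⟩
    exact ⟨C.conj_mem hg, h2, heq⟩
  · rintro ⟨h1, h2, heq⟩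
    exact ⟨mem_conjOp_domain C _ h1, h2, heq⟩

lemma SBfun_eq (C : Conjugation H) (A : H →ₗ.[ℂ] H) {g : H}
    (h1 : C g ∈ (A†).domain) : SBfun C A g = A† ⟨C g, h1⟩ := dif_pos h1

lemma Bstarfun_eq (C : Conjugation H) (A : H →ₗ.[ℂ] H) {g : H}
    (h1 : C g ∈ (A†).domain) : Bstarfun C A g = C (A† ⟨C g, h1⟩) := by
  have hd : g ∈ (C.conjOp (A†)).domain := mem_conjOp_domain C _ h1
  rw [Bstarfun, dif_pos hd]; rfl

lemma SB_key (C : Conjugation H) (A : H →ₗ.[ℂ] H) {g : H}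
    (hg : g ∈ kerIplusAstarCAstarC C A) :
    SBfun C A g ∈ kerIplusAstarCAstarC C A ∧ SBfun C A (SBfun C A g) = -g := by
  obtain ⟨h1, h2, heq⟩ := (mem_ker_iff C A).1 hg
  set v := A† ⟨C g, h1⟩ with hv
  have heq' : A† ⟨C v, h2⟩ = -g := eq_neg_of_add_eq_zero_right heq
  have hSg : SBfun C A g = v := SBfun_eq C A h1
  have hCneg : C (A† ⟨C v, h2⟩) = - C g := by rw [heq', C.map_neg'_s11]
  have hmemneg : -C g ∈ (A†).domain := (A†).domain.neg_mem h1
  have h2' : C (A† ⟨C v, h2⟩) ∈ (A†).domain := by rw [hCneg]; exact hmemneg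
  constructor
  · rw [hSg]
    refine (mem_ker_iff C A).2 ⟨h2, h2', ?_⟩
    rw [pmap_congr (A†) hCneg h2' hmemneg, pmap_neg (A†) h1 hmemneg, ← hv,
      add_neg_cancel]
  · rw [hSg, SBfun_eq C A h2, heq']

lemma ker_smul (C : Conjugation H) (A : H →ₗ.[ℂ] H) (c : ℂ) {g : H}
    (hg : g ∈ kerIplusAstarCAstarC C A) : c • g ∈ kerIplusAstarCAstarC C A := by
  obtain ⟨h1, h2, heq⟩ := (mem_ker_iff C A).1 hg
  have hc1 : C (c • g) ∈ (A†).domain := by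
    rw [C.map_smulc]; exact (A†).domain.smul_mem _ h1
  have hval : A† ⟨C (c • g), hc1⟩ = (starRingEnd ℂ c) • A† ⟨C g, h1⟩ := by
    rw [pmap_congr (A†) (C.map_smulc c g) hc1 ((A†).domain.smul_mem _ h1),
      pmap_smul (A†) _ h1]
  have hc2 : C (A† ⟨C (c • g), hc1⟩) ∈ (A†).domain := by
    rw [hval, C.map_smulc]; simp only [Complex.conj_conj]
    exact (A†).domain.smul_mem _ h2
  refine (mem_ker_iff C A).2 ⟨hc1, hc2, ?_⟩
  have hcongr : C (A† ⟨C (c • g), hc1⟩) = c • C (A† ⟨C g, h1⟩) := by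
    rw [hval, C.map_smulc]; simp
  rw [pmap_congr (A†) hcongr hc2 (by rw [← hcongr]; exact hc2),
    pmap_congr (A†) rfl _ ((A†).domain.smul_mem c h2),
    pmap_smul (A†) _ h2, ← smul_add, heq, smul_zero]

end Aux

theorem stmt_11 (C : Conjugation H) (A : H →ₗ.[ℂ] H) (hA : Dense (A.domain : Set H))
    (hclosed : A.IsClosed) (hsym : C.IsCSymmetric A) :
    (∀ g ∈ kerIplusAstarCAstarC C A, SBfun C A g ∈ kerIplusAstarCAstarC C A)
    ∧ (∀ m ∈ kerIplusAstarCAstarC C A, ∃ g ∈ kerIplusAstarCAstarC C A, SBfun C A g = m)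
    ∧ (∀ g ∈ kerIplusAstarCAstarC C A, ∀ g' ∈ kerIplusAstarCAstarC C A,
        SBfun C A (g + g') = SBfun C A g + SBfun C A g')
    ∧ (∀ (c : ℂ), ∀ g ∈ kerIplusAstarCAstarC C A,
        SBfun C A (c • g) = (starRingEnd ℂ) c • SBfun C A g)
    ∧ (∀ g ∈ kerIplusAstarCAstarC C A,
        ‖SBfun C A g‖ ^ 2 + ‖Bstarfun C A (SBfun C A g)‖ ^ 2
          = ‖g‖ ^ 2 + ‖Bstarfun C A g‖ ^ 2)
    ∧ (∀ g ∈ kerIplusAstarCAstarC C A, SBfun C A (SBfun C A g) = -g) := by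
  have hsmul : ∀ (c : ℂ), ∀ g ∈ kerIplusAstarCAstarC C A,
      SBfun C A (c • g) = (starRingEnd ℂ) c • SBfun C A g := by
    intro c g hg
    obtain ⟨h1, h2, heq⟩ := (mem_ker_iff C A).1 hg
    have hc1 : C (c • g) ∈ (A†).domain := by
      rw [C.map_smulc]; exact (A†).domain.smul_mem _ h1
    rw [SBfun_eq C A hc1, SBfun_eq C A h1,
      pmap_congr (A†) (C.map_smulc c g) hc1 ((A†).domain.smul_mem _ h1),
      pmap_smul (A†) _ h1]
  refine ⟨fun g hg => (SB_key C A hg).1, ?_, ?_, hsmul, ?_,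
    fun g hg => (SB_key C A hg).2⟩
  · intro m hm
    refine ⟨(-1 : ℂ) • SBfun C A m, ker_smul C A _ (SB_key C A hm).1, ?_⟩
    rw [hsmul (-1) _ (SB_key C A hm).1, (SB_key C A hm).2]
    simp
  · intro g hg g' hg'
    obtain ⟨h1, _, _⟩ := (mem_ker_iff C A).1 hg
    obtain ⟨h1', _, _⟩ := (mem_ker_iff C A).1 hg'
    have hc1 : C (g + g') ∈ (A†).domain := by
      rw [C.map_add']; exact (A†).domain.add_mem h1 h1'
    rw [SBfun_eq C A hc1, SBfun_eq C A h1, SBfun_eq C A h1',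
      pmap_congr (A†) (C.map_add' g g') hc1 ((A†).domain.add_mem h1 h1'),
      pmap_add (A†) h1 h1']
  · intro g hg
    obtain ⟨h1, h2, heq⟩ := (mem_ker_iff C A).1 hg
    have heq' : A† ⟨C (A† ⟨C g, h1⟩), h2⟩ = -g := eq_neg_of_add_eq_zero_right heq
    have hSg : SBfun C A g = A† ⟨C g, h1⟩ := SBfun_eq C A h1
    have hCv : C (SBfun C A g) ∈ (A†).domain := by rw [hSg]; exact h2
    have hBSg : Bstarfun C A (SBfun C A g) = - C g := by
      rw [Bstarfun_eq C A hCv, pmap_congr (A†) (by rw [hSg]) hCv h2, heq', C.map_neg'_s11]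
    have hBg : Bstarfun C A g = C (A† ⟨C g, h1⟩) := Bstarfun_eq C A h1
    rw [hBSg, hBg, hSg, norm_neg, C.norm_conj, C.norm_conj]
    ring
end
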